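/- Let q be a prime power and G = GL_n(F_q) act on Q = F_q[x_1,...,x_n]/(x_1^q,...,x_n^q) by linear substitutions. Then the ring of invariants Q^G is the 2-dimensional F_q-vector space spanned by 1 and the image of x_1^{q-1} x_2^{q-1} ··· x_n^{q-1}; consequently the Hilbert series of Q^G is 1 + t^{n(q-1)}. -/

import Mathlib

open MvPolynomial Finset

/-- The action of `g ∈ GL_n(F)` on `F[x_1,…,x_n]` by linear substitution of variables. -/
noncomputable def glAct (F : Type) [Field F] (n : ℕ) (g : GL (Fin n) F) :
    MvPolynomial (Fin n) F →ₐ[F] MvPolynomial (Fin n) F :=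
  MvPolynomial.aeval fun i => ∑ j, (g : Matrix (Fin n) (Fin n) F) i j • MvPolynomial.X j

/-- The ideal `(x_1^N, …, x_n^N)`. -/
noncomputable def frobIdeal (F : Type) [Field F] (n N : ℕ) :
    Ideal (MvPolynomial (Fin n) F) :=
  Ideal.span (Set.range fun i : Fin n => (MvPolynomial.X i : MvPolynomial (Fin n) F) ^ N)

namespace S8

variable {F : Type} [Field F] {n : ℕ}




noncomputable def substM (A : Matrix (Fin n) (Fin n) F) :
    MvPolynomial (Fin n) F →ₐ[F] MvPolynomial (Fin n) F :=
  MvPolynomial.aeval fun i => ∑ j, A i j • MvPolynomial.X j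

lemma substM_X (A : Matrix (Fin n) (Fin n) F) (i : Fin n) :
    substM A (X i) = ∑ j, A i j • X j := aeval_X _ _

lemma substM_comp (A B : Matrix (Fin n) (Fin n) F) :
    (substM B).comp (substM A) = substM (A * B) := by
  apply MvPolynomial.algHom_ext; intro i
  simp only [AlgHom.comp_apply, substM_X, map_sum, map_smul, Matrix.mul_apply]
  simp only [Finset.smul_sum, Finset.sum_smul, smul_smul]
  rw [Finset.sum_comm]

lemma substM_one : substM (1 : Matrix (Fin n) (Fin n) F) = AlgHom.id F _ := by
  apply MvPolynomial.algHom_ext; intro i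
  simp [substM_X, Matrix.one_apply, Finset.sum_ite_eq]

variable [Fintype F] {q : ℕ}

lemma linear_pow_card (hq : Fintype.card F = q) (c : Fin n → F) :
    (∑ j, c j • (X j : MvPolynomial (Fin n) F)) ^ q
      = ∑ j, c j • ((X j : MvPolynomial (Fin n) F)) ^ q := by
  obtain ⟨k, hp, hcard⟩ := FiniteField.card F (ringChar F)
  haveI := Fact.mk hp
  subst hq
  rw [hcard, sum_pow_char_pow]
  congr 1; funext j
  rw [smul_pow, ← hcard, FiniteField.pow_card]

lemma substM_mem_frobIdeal (hq : Fintype.card F = q) (A : Matrix (Fin n) (Fin n) F)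
    {f : MvPolynomial (Fin n) F} (hf : f ∈ frobIdeal F n q) :
    substM A f ∈ frobIdeal F n q := by
  refine Submodule.span_induction ?_ ?_ ?_ ?_ hf
  · rintro x ⟨i, rfl⟩
    rw [map_pow, substM_X, linear_pow_card hq]
    refine Ideal.sum_mem _ fun j _ => ?_
    rw [smul_eq_C_mul]
    exact Ideal.mul_mem_left _ _ (Ideal.subset_span ⟨j, rfl⟩)
  · simp
  · intro x y _ _ hx hy; rw [map_add]; exact Ideal.add_mem _ hx hy
  · intro r x _ hx; rw [smul_eq_mul, map_mul]; exact Ideal.mul_mem_left _ _ hx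


section Red
variable {q : ℕ}


lemma mem_frobIdeal_iff (f : MvPolynomial (Fin n) F) :
    f ∈ frobIdeal F n q ↔ ∀ m ∈ f.support, ∃ i, q ≤ m i := by
  have : frobIdeal F n q = Ideal.span ((fun s => monomial s (1:F)) ''
      Set.range (fun i : Fin n => Finsupp.single i q)) := by
    unfold frobIdeal; congr 1
    ext p
    simp [X_pow_eq_monomial]
  rw [this, mem_ideal_span_monomial_image]
  simp [Finsupp.single_le_iff]

def IsRed (q : ℕ) (f : MvPolynomial (Fin n) F) : Prop := ∀ m ∈ f.support, ∀ k, m k < q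

lemma eq_zero_of_isRed_mem {f : MvPolynomial (Fin n) F} (hr : IsRed q f)
    (hf : f ∈ frobIdeal F n q) : f = 0 := by
  rw [mem_frobIdeal_iff] at hf
  by_contra h
  obtain ⟨m, hm⟩ := support_nonempty.2 h
  obtain ⟨i, hi⟩ := hf m hm
  exact absurd (hr m hm i) (not_lt.2 hi)

noncomputable def red (q : ℕ) (f : MvPolynomial (Fin n) F) : MvPolynomial (Fin n) F :=
  ∑ m ∈ f.support.filter (fun m => ∀ k, m k < q), monomial m (coeff m f)

lemma coeff_red (f : MvPolynomial (Fin n) F) (m : Fin n →₀ ℕ) :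
    coeff m (red q f) = if ∀ k, m k < q then coeff m f else 0 := by
  rw [red, coeff_sum]
  simp only [coeff_monomial]
  rw [Finset.sum_ite_eq']
  by_cases hP : ∀ k, m k < q
  · by_cases hs : m ∈ f.support
    · simp [hs, hP]
    · simp [hs, hP, MvPolynomial.notMem_support_iff.1 hs]
  · simp [hP]

lemma isRed_red (f : MvPolynomial (Fin n) F) : IsRed q (red q f) := by
  intro m hm k
  rw [mem_support_iff, coeff_red] at hm
  by_cases hP : ∀ k, m k < q
  · exact hP k
  · simp [hP] at hm

lemma sub_red_mem (f : MvPolynomial (Fin n) F) : f - red q f ∈ frobIdeal F n q := by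
  rw [mem_frobIdeal_iff]
  intro m hm
  rw [mem_support_iff, coeff_sub, coeff_red] at hm
  by_cases hP : ∀ k, m k < q
  · simp [hP] at hm
  · push_neg at hP; obtain ⟨i, hi⟩ := hP; exact ⟨i, hi⟩

lemma mk_red (f : MvPolynomial (Fin n) F) :
    Ideal.Quotient.mk (frobIdeal F n q) (red q f) = Ideal.Quotient.mk _ f := by
  rw [Ideal.Quotient.mk_eq_mk_iff_sub_mem]
  have := sub_red_mem (q := q) f
  simpa using (frobIdeal F n q).neg_mem this


end Red
lemma substM_monomial_of_fixed (A : Matrix (Fin n) (Fin n) F) (e : Fin n →₀ ℕ) (a : F)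
    (h : ∀ k ∈ e.support, (∑ j, A k j • (X j : MvPolynomial (Fin n) F)) = X k) :
    substM A (monomial e a) = monomial e a := by
  rw [substM, aeval_monomial, monomial_eq]
  congr 1
  exact Finsupp.prod_congr fun k hk => by rw [h k hk]

lemma substM_diagonal_monomial (d : Fin n → F) (m : Fin n →₀ ℕ) (a : F) :
    substM (Matrix.diagonal d) (monomial m a) = monomial m ((∏ k, d k ^ m k) * a) := by
  rw [substM, aeval_monomial]
  have hg : ∀ i : Fin n, (∑ j, Matrix.diagonal d i j • (X j : MvPolynomial (Fin n) F))
      = C (d i) * X i := by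
    intro i
    rw [Finset.sum_eq_single i]
    · rw [Matrix.diagonal_apply_eq, smul_eq_C_mul]
    · intro b _ hb; rw [Matrix.diagonal_apply_ne' d hb, zero_smul]
    · simp
  simp only [hg]
  rw [monomial_eq]
  have : (m.prod fun i k => (C (d i) * X i) ^ k)
      = C (∏ k ∈ m.support, d k ^ m k) * m.prod fun i k => (X i : MvPolynomial (Fin n) F) ^ k := by
    rw [Finsupp.prod, Finsupp.prod, map_prod, ← Finset.prod_mul_distrib]
    exact Finset.prod_congr rfl fun k _ => by rw [mul_pow, map_pow]
  rw [this]
  have hprod : (∏ k ∈ m.support, d k ^ m k) = ∏ k, d k ^ m k := by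
    refine Finset.prod_subset (Finset.subset_univ _) fun k _ hk => ?_
    rw [Finsupp.notMem_support_iff.1 hk, pow_zero]
  rw [hprod, algebraMap_eq, ← mul_assoc, ← map_mul, mul_comm a]

lemma coeff_substM_diagonal (d : Fin n → F) (f : MvPolynomial (Fin n) F) (m : Fin n →₀ ℕ) :
    coeff m (substM (Matrix.diagonal d) f) = (∏ k, d k ^ m k) * coeff m f := by
  conv_lhs => rw [f.as_sum]
  rw [map_sum, coeff_sum]
  simp only [substM_diagonal_monomial, coeff_monomial]
  rw [Finset.sum_ite_eq']
  by_cases hs : m ∈ f.support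
  · simp [hs]
  · simp [hs, MvPolynomial.notMem_support_iff.1 hs]

lemma substM_transvection_monomial (i j : Fin n) (hij : i ≠ j) (c : F) (m : Fin n →₀ ℕ) (a : F) :
    substM (Matrix.transvection i j c) (monomial m a)
      = (X i + C c * X j) ^ (m i) * monomial (m.erase i) a := by
  have hrow : ∀ k : Fin n, k ≠ i →
      (∑ l, Matrix.transvection i j c k l • (X l : MvPolynomial (Fin n) F)) = X k := by
    intro k hk
    rw [Finset.sum_eq_single k]
    · rw [Matrix.transvection, Matrix.add_apply, Matrix.one_apply_eq,
        Matrix.single_apply_of_ne i j c k k (fun h => hk h.1.symm), add_zero, one_smul]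
    · intro b _ hb
      rw [Matrix.transvection, Matrix.add_apply, Matrix.one_apply_ne (Ne.symm hb),
        Matrix.single_apply_of_ne i j c k b (fun h => hk h.1.symm), add_zero, zero_smul]
    · simp
  have hrowi : (∑ l, Matrix.transvection i j c i l • (X l : MvPolynomial (Fin n) F))
      = X i + C c * X j := by
    rw [Matrix.transvection]
    simp only [Matrix.add_apply, add_smul, Finset.sum_add_distrib]
    congr 1
    · rw [Finset.sum_eq_single i]
      · rw [Matrix.one_apply_eq, one_smul]
      · intro b _ hb; rw [Matrix.one_apply_ne (Ne.symm hb), zero_smul]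
      · simp
    · rw [Finset.sum_eq_single j]
      · rw [Matrix.single_apply_same, smul_eq_C_mul]
      · intro b _ hb; rw [Matrix.single_apply_of_ne i j c i b (fun h => hb h.2.symm), zero_smul]
      · simp
  have hsplit : monomial m a
      = (X i : MvPolynomial (Fin n) F) ^ (m i) * monomial (m.erase i) a := by
    rw [X_pow_eq_monomial, monomial_mul, one_mul, Finsupp.single_add_erase]
  rw [hsplit, map_mul, map_pow]
  rw [show substM (Matrix.transvection i j c) (X i) = X i + C c * X j from
    (substM_X _ _).trans hrowi]
  congr 1
  exact substM_monomial_of_fixed _ _ _ fun k hk =>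
    hrow k (fun h => by simp [h, Finsupp.erase_same] at hk)



section Top

variable [Fintype F] {q : ℕ}

noncomputable def topm (n q : ℕ) : Fin n →₀ ℕ := ∑ i : Fin n, Finsupp.single i (q - 1)

lemma topm_apply (k : Fin n) : topm n q k = q - 1 := by
  rw [topm, Finsupp.finset_sum_apply]
  rw [Finset.sum_eq_single k]
  · rw [Finsupp.single_eq_same]
  · intro b _ hb; exact Finsupp.single_eq_of_ne' hb
  · simp

lemma top_eq : (∏ i, X i ^ (q-1) : MvPolynomial (Fin n) F) = monomial (topm n q) 1 := by
  simp only [X_pow_eq_monomial]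
  rw [topm, monomial_sum_one]

/-- the invariance property of the top monomial under substitution by a matrix. -/
def TopInv (q : ℕ) (A : Matrix (Fin n) (Fin n) F) : Prop :=
  Ideal.Quotient.mk (frobIdeal F n q) (substM A (monomial (topm n q) 1))
    = Ideal.Quotient.mk (frobIdeal F n q) (monomial (topm n q) 1)

lemma topInv_mul (hq : Fintype.card F = q) {A B : Matrix (Fin n) (Fin n) F}
    (hA : TopInv q A) (hB : TopInv q B) : TopInv q (A * B) := by
  unfold TopInv at *
  have h1 : substM (A * B) (monomial (topm n q) 1)
      = substM B (substM A (monomial (topm n q) 1)) := by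
    rw [← substM_comp]; rfl
  rw [Ideal.Quotient.mk_eq_mk_iff_sub_mem] at hA ⊢
  rw [h1]
  have h2 : substM B (substM A (monomial (topm n q) 1))
      - substM B (monomial (topm n q) 1) ∈ frobIdeal F n q := by
    rw [← map_sub]
    exact substM_mem_frobIdeal hq B hA
  have h3 := Ideal.Quotient.mk_eq_mk_iff_sub_mem _ _ |>.1 hB
  simpa using Ideal.add_mem _ h2 h3

lemma topInv_one : TopInv (F := F) (n := n) q 1 := by
  unfold TopInv; rw [substM_one]; rfl

lemma topInv_diagonal (hq : Fintype.card F = q) {d : Fin n → F} (hd : ∀ k, d k ≠ 0) :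
    TopInv q (Matrix.diagonal d) := by
  unfold TopInv
  rw [substM_diagonal_monomial]
  congr 2
  have : ∀ k, d k ^ topm n q k = 1 := by
    intro k
    rw [topm_apply, ← hq]
    exact FiniteField.pow_card_sub_one_eq_one _ (hd k)
  simp [this]

lemma topInv_transvection (hq : Fintype.card F = q) (i j : Fin n) (hij : i ≠ j) (c : F) :
    TopInv q (Matrix.transvection i j c) := by
  have hq2 : 2 ≤ q := hq ▸ Fintype.one_lt_card
  unfold TopInv
  rw [substM_transvection_monomial i j hij, topm_apply,
    Ideal.Quotient.mk_eq_mk_iff_sub_mem]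
  rw [add_pow]
  rw [Finset.sum_mul]
  have hq1 : q - 1 + 1 = q := by omega
  rw [show range (q - 1 + 1) = range (q-1) ∪ {q-1} by
    rw [Finset.range_add_one]; rw [Finset.union_comm]; rfl]
  rw [Finset.sum_union (by simp)]
  have hlast : ∑ t ∈ {q-1}, X i ^ t * (C c * X j) ^ (q - 1 - t) * (↑((q-1).choose t) : MvPolynomial (Fin n) F) * monomial ((topm n q).erase i) 1
      = X i ^ (q-1) * monomial ((topm n q).erase i) 1 := by
    simp
  rw [hlast]
  have hsplit : (X i : MvPolynomial (Fin n) F) ^ (q-1) * monomial ((topm n q).erase i) 1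
      = monomial (topm n q) 1 := by
    rw [X_pow_eq_monomial, monomial_mul, one_mul, ← topm_apply (q := q) i, Finsupp.single_add_erase]
  rw [hsplit, add_sub_cancel_right]
  refine Ideal.sum_mem _ fun t ht => ?_
  rw [Finset.mem_range] at ht
  -- each summand is a multiple of X j ^ q
  have herase : monomial ((topm n q).erase i) 1
      = (X j : MvPolynomial (Fin n) F) ^ (q-1) * monomial (((topm n q).erase i).erase j) 1 := by
    rw [X_pow_eq_monomial, monomial_mul, one_mul]
    congr 1
    rw [show q - 1 = ((topm n q).erase i) j by
      rw [Finsupp.erase_ne (Ne.symm hij), topm_apply]]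
    rw [Finsupp.single_add_erase]
  have hXj : (C c * X j : MvPolynomial (Fin n) F) ^ (q - 1 - t) * monomial ((topm n q).erase i) 1
      = (C c ^ (q-1-t) * X j ^ (q - 2 - t) * monomial (((topm n q).erase i).erase j) 1) * X j ^ q := by
    rw [herase]
    have h2 : (q - 1 - t) + (q - 1) = (q - 2 - t) + q := by omega
    calc (C c * X j) ^ (q - 1 - t) * ((X j:MvPolynomial (Fin n) F) ^ (q-1) * monomial (((topm n q).erase i).erase j) 1)
        = C c ^ (q-1-t) * (X j ^ (q-1-t) * X j ^ (q-1)) * monomial (((topm n q).erase i).erase j) 1 := by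
          rw [mul_pow]; ring
      _ = C c ^ (q-1-t) * X j ^ ((q-1-t) + (q-1)) * monomial (((topm n q).erase i).erase j) 1 := by
          rw [pow_add]
      _ = C c ^ (q-1-t) * X j ^ ((q-2-t) + q) * monomial (((topm n q).erase i).erase j) 1 := by
          rw [h2]
      _ = C c ^ (q-1-t) * X j ^ (q-2-t) * monomial (((topm n q).erase i).erase j) 1 * X j ^ q := by
          rw [pow_add]; ring
  have heq : X i ^ t * (C c * X j) ^ (q - 1 - t) * (↑((q-1).choose t) : MvPolynomial (Fin n) F) * monomial ((topm n q).erase i) 1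
      = (X i ^ t * (↑((q-1).choose t) : MvPolynomial (Fin n) F) * (C c ^ (q-1-t) * X j ^ (q - 2 - t) * monomial (((topm n q).erase i).erase j) 1)) * X j ^ q := by
    rw [mul_right_comm (X i ^ t), mul_assoc _ _ (monomial ((topm n q).erase i) 1), hXj]; ring
  rw [heq]
  exact Ideal.mul_mem_left _ _ (Ideal.subset_span ⟨j, rfl⟩)

end Top


section Main

variable [Fintype F] {q : ℕ}

lemma isRed_eq {f g : MvPolynomial (Fin n) F} (hf : IsRed q f) (hg : IsRed q g)
    (h : f - g ∈ frobIdeal F n q) : f = g := by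
  have hred : IsRed q (f - g) := by
    intro m hm k
    rcases Finset.mem_union.1 (MvPolynomial.support_sub _ f g hm) with h' | h'
    · exact hf m h' k
    · exact hg m h' k
  exact sub_eq_zero.1 (eq_zero_of_isRed_mem hred h)

lemma cast_q_sub_one_ne (hq : Fintype.card F = q) : ((q - 1 : ℕ) : F) ≠ 0 := by
  have hq2 : 2 ≤ q := hq ▸ Fintype.one_lt_card
  have h0 : ((q : ℕ) : F) = 0 := hq ▸ FiniteField.cast_card_eq_zero F
  rw [Nat.cast_sub (by omega), h0, zero_sub, Nat.cast_one]
  exact neg_ne_zero.2 one_ne_zero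

lemma support_vals (hq : Fintype.card F = q) {f : MvPolynomial (Fin n) F}
    (hred : IsRed q f)
    (hstep : ∀ g : GL (Fin n) F, substM (g : Matrix (Fin n) (Fin n) F) f - f ∈ frobIdeal F n q)
    {m : Fin n →₀ ℕ} (hm : m ∈ f.support) (i : Fin n) : m i = 0 ∨ m i = q - 1 := by
  have hq2 : 2 ≤ q := hq ▸ Fintype.one_lt_card
  have key : ∀ c : Fˣ, (c : F) ^ (m i) = 1 := by
    intro c
    set d : Fin n → F := fun k => if k = i then (c : F) else 1 with hd
    have hdet : IsUnit (Matrix.diagonal d).det := by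
      rw [Matrix.det_diagonal]
      refine isUnit_iff_ne_zero.2 (Finset.prod_ne_zero_iff.2 fun k _ => ?_)
      by_cases hk : k = i <;> simp [hd, hk, c.ne_zero]
    have hst := hstep (Matrix.nonsingInvUnit _ hdet)
    have hco : ((Matrix.nonsingInvUnit (Matrix.diagonal d) hdet : GL (Fin n) F) :
        Matrix (Fin n) (Fin n) F) = Matrix.diagonal d := rfl
    rw [hco] at hst
    have heq : substM (Matrix.diagonal d) f = f := by
      refine isRed_eq ?_ hred hst
      intro m' hm' k
      have h1 : coeff m' (substM (Matrix.diagonal d) f) ≠ 0 := mem_support_iff.1 hm'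
      rw [coeff_substM_diagonal] at h1
      have h2 : coeff m' f ≠ 0 := fun h => h1 (by rw [h, mul_zero])
      exact hred m' (mem_support_iff.2 h2) k
    have h3 := congrArg (coeff m) heq
    rw [coeff_substM_diagonal] at h3
    have hprod : (∏ k, d k ^ m k) = (c : F) ^ m i := by
      rw [Finset.prod_eq_single i]
      · simp [hd]
      · intro b _ hb; simp [hd, hb]
      · simp
    rw [hprod] at h3
    exact mul_right_cancel₀ (mem_support_iff.1 hm) (h3.trans (one_mul _).symm)
  obtain ⟨ζ, hζ⟩ := IsCyclic.exists_generator (α := Fˣ)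
  have hord : orderOf ζ = q - 1 := by
    classical
    rw [orderOf_eq_card_of_forall_mem_zpowers hζ, Nat.card_eq_fintype_card, Fintype.card_units, hq]
  have hdvd : (q - 1) ∣ m i := by
    rw [← hord]
    refine orderOf_dvd_of_pow_eq_one (Units.ext ?_)
    rw [Units.val_pow_eq_pow_val, key ζ, Units.val_one]
  have hlt : m i < q := hred m hm i
  rcases Nat.eq_zero_or_pos (m i) with h0 | hpos
  · exact Or.inl h0
  · exact Or.inr (by have := Nat.le_of_dvd hpos hdvd; omega)

lemma support_subset_main (hq : Fintype.card F = q) {f : MvPolynomial (Fin n) F}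
    (hred : IsRed q f)
    (hstep : ∀ g : GL (Fin n) F, substM (g : Matrix (Fin n) (Fin n) F) f - f ∈ frobIdeal F n q) :
    f.support ⊆ {0, topm n q} := by
  have hq2 : 2 ≤ q := hq ▸ Fintype.one_lt_card
  intro m hm
  rw [Finset.mem_insert, Finset.mem_singleton]
  by_contra hne
  push_neg at hne
  obtain ⟨hm0, hmt⟩ := hne
  have hvals := fun (m' : Fin n →₀ ℕ) (hm' : m' ∈ f.support) (k : Fin n) =>
    support_vals hq hred hstep hm' k
  -- find i with m i = q - 1
  obtain ⟨i, hi0⟩ : ∃ i, m i ≠ 0 := by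
    by_contra h; push_neg at h; exact hm0 (Finsupp.ext h)
  have hi : m i = q - 1 := (hvals m hm i).resolve_left hi0
  -- find j with m j = 0
  obtain ⟨j, hj'⟩ : ∃ j, m j ≠ q - 1 := by
    by_contra h; push_neg at h
    exact hmt (Finsupp.ext fun k => by rw [h k, topm_apply])
  have hj : m j = 0 := (hvals m hm j).resolve_right hj'
  have hij : i ≠ j := fun h => hi0 (h ▸ hj)
  -- the transvection
  have hdet : IsUnit (Matrix.transvection i j (1 : F)).det := by
    rw [Matrix.det_transvection_of_ne i j hij]; exact isUnit_one
  have hst := hstep (Matrix.nonsingInvUnit _ hdet)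
  have hco : ((Matrix.nonsingInvUnit (Matrix.transvection i j (1:F)) hdet : GL (Fin n) F) :
      Matrix (Fin n) (Fin n) F) = Matrix.transvection i j (1:F) := rfl
  rw [hco] at hst
  -- the monomial M
  set M : Fin n →₀ ℕ := m + Finsupp.single j 1 - Finsupp.single i 1 with hM
  have hMi : M i = q - 2 := by
    rw [hM, Finsupp.tsub_apply, Finsupp.add_apply, Finsupp.single_eq_same,
      Finsupp.single_eq_of_ne' hij.symm, hi]
    omega
  have hMj : M j = 1 := by
    rw [hM, Finsupp.tsub_apply, Finsupp.add_apply, Finsupp.single_eq_same,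
      Finsupp.single_eq_of_ne' hij, hj]
    omega
  have hMk : ∀ k, k ≠ i → k ≠ j → M k = m k := by
    intro k hki hkj
    rw [hM, Finsupp.tsub_apply, Finsupp.add_apply, Finsupp.single_eq_of_ne' (Ne.symm hkj),
      Finsupp.single_eq_of_ne' (Ne.symm hki)]
    omega
  have hMlt : ∀ k, M k < q := by
    intro k
    by_cases hki : k = i
    · rw [hki, hMi]; omega
    · by_cases hkj : k = j
      · rw [hkj, hMj]; omega
      · rw [hMk k hki hkj]; exact hred m hm k
  have hMm : M ≠ m := by
    intro h
    have hthis : M i = m i := by rw [h]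
    rw [hMi, hi] at hthis
    omega
  -- coefficient of M is preserved
  have hcoeffM : coeff M (substM (Matrix.transvection i j (1:F)) f) = coeff M f := by
    by_contra hne'
    have h1 : coeff M (substM (Matrix.transvection i j (1:F)) f - f) ≠ 0 := by
      rw [coeff_sub]; exact sub_ne_zero.2 hne'
    obtain ⟨k, hk⟩ := (mem_frobIdeal_iff _).1 hst M (mem_support_iff.2 h1)
    exact absurd (hMlt k) (not_lt.2 hk)
  -- compute the coefficient
  have hterm : ∀ m' ∈ f.support,
      coeff M ((X i + C (1:F) * X j) ^ (m' i) * monomial (m'.erase i) (coeff m' f))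
        = (if m' = m then ((q - 1 : ℕ) : F) * coeff m f else 0)
          + (if m' = M then coeff M f else 0) := by
    intro m' hm'
    rw [map_one, one_mul, add_pow]
    rw [Finset.sum_mul, coeff_sum]
    have hexp : ∀ t, (X i : MvPolynomial (Fin n) F) ^ t * X j ^ (m' i - t)
          * ((m' i).choose t : MvPolynomial (Fin n) F) * monomial (m'.erase i) (coeff m' f)
        = C (((m' i).choose t : F)) * monomial
            (Finsupp.single i t + Finsupp.single j (m' i - t) + m'.erase i) (coeff m' f) := by
      intro t
      rw [X_pow_eq_monomial, X_pow_eq_monomial, ← C_eq_coe_nat, ← monomial_zero']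
      simp only [monomial_mul]
      congr 1
      · abel
      · ring
    simp only [hexp, coeff_C_mul, coeff_monomial]
    rcases hvals m' hm' i with ha0 | ha1
    · -- m' i = 0 : single term t = 0
      rw [ha0]
      rw [Finset.sum_range_one]
      have herase : m'.erase i = m' := by
        ext k
        by_cases hk : k = i
        · rw [hk, Finsupp.erase_same, ha0]
        · rw [Finsupp.erase_ne hk]
      simp only [Nat.sub_zero, Finsupp.single_zero, zero_add, herase, Nat.choose_self,
        Nat.cast_one, one_mul]
      have hm'm : m' ≠ m := by
        intro h; rw [h] at ha0; rw [ha0] at hi0; exact hi0 rfl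
      rw [if_neg hm'm, zero_add]
      by_cases hMm' : m' = M
      · rw [if_pos hMm', if_pos hMm', hMm']
      · rw [if_neg hMm', if_neg hMm']
    · -- m' i = q - 1
      rw [ha1]
      have hm'M : m' ≠ M := by
        intro h
        have hthis : m' i = M i := by rw [h]
        rw [ha1, hMi] at hthis
        omega
      rw [if_neg hm'M]
      rw [add_zero]
      by_cases hm'm : m' = m
      · -- only t = q - 2 contributes
        subst hm'm
        rw [if_pos rfl]
        rw [Finset.sum_eq_single (q - 2)]
        · have heq : Finsupp.single i (q - 2) + Finsupp.single j (q - 1 - (q - 2)) + m'.erase i = M := by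
            ext k
            simp only [Finsupp.add_apply]
            by_cases hk : k = i
            · rw [hk, Finsupp.single_eq_same, Finsupp.single_eq_of_ne' (Ne.symm hij),
                Finsupp.erase_same, hMi]
              omega
            · by_cases hkj : k = j
              · rw [hkj, Finsupp.single_eq_of_ne' hij, Finsupp.single_eq_same,
                  Finsupp.erase_ne (Ne.symm hij), hj, hMj]
                omega
              · rw [Finsupp.single_eq_of_ne' (Ne.symm hk), Finsupp.single_eq_of_ne' (Ne.symm hkj),
                  Finsupp.erase_ne hk, hMk k hk hkj]
                omega
          rw [if_pos heq]
          congr 1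
          have hch : (q - 1).choose (q - 2) = q - 1 := by
            rw [show q - 2 = (q - 1) - 1 by omega,
              Nat.choose_symm (by omega : 1 ≤ q - 1), Nat.choose_one_right]
          rw [hch]
        · intro t _ hti
          rw [if_neg, mul_zero]
          intro h
          have hthis : (Finsupp.single i t + Finsupp.single j (q - 1 - t) + m'.erase i) i = M i := by
            rw [h]
          simp only [Finsupp.add_apply, Finsupp.single_eq_same,
            Finsupp.single_eq_of_ne' hij.symm, Finsupp.erase_same] at hthis
          rw [hMi] at hthis
          omega
        · intro h
          exfalso
          exact h (Finset.mem_range.2 (by omega))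
      · -- no contribution
        rw [if_neg hm'm]
        refine Finset.sum_eq_zero fun t _ => ?_
        rw [if_neg, mul_zero]
        intro h
        have hti : (Finsupp.single i t + Finsupp.single j (q - 1 - t) + m'.erase i) i = M i := by
          rw [h]
        simp only [Finsupp.add_apply, Finsupp.single_eq_same,
          Finsupp.single_eq_of_ne' hij.symm, Finsupp.erase_same] at hti
        rw [hMi] at hti
        have htj : (Finsupp.single i t + Finsupp.single j (q - 1 - t) + m'.erase i) j = M j := by
          rw [h]
        simp only [Finsupp.add_apply, Finsupp.single_eq_of_ne' (fun hh => hij hh.symm),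
          Finsupp.single_eq_same, Finsupp.erase_ne (Ne.symm hij)] at htj
        rw [hMj] at htj
        apply hm'm
        ext k
        by_cases hk : k = i
        · rw [hk, ha1, hi]
        · by_cases hkj : k = j
          · rw [hkj, hj]; omega
          · have hthis : (Finsupp.single i t + Finsupp.single j (q - 1 - t) + m'.erase i) k = M k := by
              rw [h]
            simp only [Finsupp.add_apply, Finsupp.single_eq_of_ne' (Ne.symm hk),
              Finsupp.single_eq_of_ne' (Ne.symm hkj), Finsupp.erase_ne hk] at hthis
            rw [hMk k hk hkj] at hthis
            omega
  -- assemble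
  have hsum : coeff M (substM (Matrix.transvection i j (1:F)) f)
      = ((q - 1 : ℕ) : F) * coeff m f + coeff M f := by
    conv_lhs => rw [f.as_sum]
    rw [map_sum, coeff_sum]
    have := fun m' (hm' : m' ∈ f.support) =>
      substM_transvection_monomial i j hij (1:F) m' (coeff m' f)
    rw [Finset.sum_congr rfl fun m' hm' => by rw [this m' hm', hterm m' hm']]
    rw [Finset.sum_add_distrib]
    congr 1
    · rw [Finset.sum_ite_eq' f.support m (fun _ => ((q - 1 : ℕ) : F) * coeff m f), if_pos hm]
    · rw [Finset.sum_ite_eq' f.support M (fun _ => coeff M f)]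
      by_cases hMs : M ∈ f.support
      · rw [if_pos hMs]
      · rw [if_neg hMs, MvPolynomial.notMem_support_iff.1 hMs]
  rw [hsum, add_eq_right] at hcoeffM
  have : coeff m f = 0 := by
    rcases mul_eq_zero.1 hcoeffM with h | h
    · exact absurd h (cast_q_sub_one_ne hq)
    · exact h
  exact mem_support_iff.1 hm this

end Main

section GLfull

variable [Fintype F] {q : ℕ}

lemma topInv_list_prod (hq : Fintype.card F = q) (L : List (Matrix.TransvectionStruct (Fin n) F)) :
    TopInv q (L.map Matrix.TransvectionStruct.toMatrix).prod := by
  induction L with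
  | nil => simpa using topInv_one
  | cons t L ih =>
    rw [List.map_cons, List.prod_cons]
    exact topInv_mul hq (topInv_transvection hq t.i t.j t.hij t.c) ih

lemma topInv_GL (hq : Fintype.card F = q) (g : GL (Fin n) F) :
    TopInv q (g : Matrix (Fin n) (Fin n) F) := by
  obtain ⟨L, L', D, h⟩ :=
    Matrix.Pivot.exists_list_transvec_mul_diagonal_mul_list_transvec (g : Matrix (Fin n) (Fin n) F)
  have hdet : (g : Matrix (Fin n) (Fin n) F).det ≠ 0 := by
    have hu : IsUnit (g : Matrix (Fin n) (Fin n) F) := ⟨g, rfl⟩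
    exact ((Matrix.isUnit_iff_isUnit_det _).1 hu).ne_zero
  have hD : ∀ k, D k ≠ 0 := by
    intro k
    have hdetD : (g : Matrix (Fin n) (Fin n) F).det = ∏ k, D k := by
      rw [h, Matrix.det_mul, Matrix.det_mul, Matrix.TransvectionStruct.det_toMatrix_prod,
        Matrix.TransvectionStruct.det_toMatrix_prod, Matrix.det_diagonal, one_mul, mul_one]
    rw [hdetD] at hdet
    exact fun h0 => hdet (Finset.prod_eq_zero (Finset.mem_univ k) h0)
  rw [h]
  exact topInv_mul hq (topInv_mul hq (topInv_list_prod hq L) (topInv_diagonal hq hD))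
    (topInv_list_prod hq L')

lemma mkQ_span (a b : F) :
    a • (1 : MvPolynomial (Fin n) F ⧸ frobIdeal F n q)
      + b • Ideal.Quotient.mkₐ F (frobIdeal F n q) (monomial (topm n q) 1)
    = Ideal.Quotient.mkₐ F (frobIdeal F n q) (C a + monomial (topm n q) b) := by
  rw [map_add]
  congr 1
  · rw [show (C a : MvPolynomial (Fin n) F) = a • 1 by
      rw [Algebra.smul_def, MvPolynomial.algebraMap_eq, mul_one], map_smul, map_one]
  · rw [show (monomial (topm n q) b : MvPolynomial (Fin n) F) = b • monomial (topm n q) 1 by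
      rw [smul_monomial, smul_eq_mul, mul_one], map_smul]

end GLfull

end S8

lemma glAct_eq_substM (F : Type) [Field F] (n : ℕ) (g : GL (Fin n) F) :
    glAct F n g = S8.substM (g : Matrix (Fin n) (Fin n) F) := rfl

/-- for `Q = F_q[x_1,…,x_n]/(x_1^q,…,x_n^q)` with `G = GL_n(F_q)`, the
invariant ring `Q^G` is spanned by `1` and the image of `x_1^{q-1}⋯x_n^{q-1}`, and
these two elements are linearly independent (so `Q^G` is 2-dimensional, with Hilbert
series `1 + t^{n(q-1)}`). -/
theorem statement8 (F : Type) [Field F] [Fintype F] (q : ℕ) (hq : Fintype.card F = q)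
    (n : ℕ) (hn : 1 ≤ n) :
    ({y : MvPolynomial (Fin n) F ⧸ frobIdeal F n q |
        ∀ g : GL (Fin n) F, ∀ f : MvPolynomial (Fin n) F,
          Ideal.Quotient.mk (frobIdeal F n q) f = y →
            Ideal.Quotient.mk (frobIdeal F n q) (glAct F n g f) = y}
      = (Submodule.span F
          {(1 : MvPolynomial (Fin n) F ⧸ frobIdeal F n q),
            Ideal.Quotient.mk (frobIdeal F n q) (∏ i, MvPolynomial.X i ^ (q - 1))} :
          Set (MvPolynomial (Fin n) F ⧸ frobIdeal F n q)))
    ∧ LinearIndependent F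
        ![(1 : MvPolynomial (Fin n) F ⧸ frobIdeal F n q),
          Ideal.Quotient.mk (frobIdeal F n q) (∏ i, MvPolynomial.X i ^ (q - 1))] := by
  classical
  have hq2 : 2 ≤ q := hq ▸ Fintype.one_lt_card
  have htop : (∏ i, X i ^ (q-1) : MvPolynomial (Fin n) F) = monomial (S8.topm n q) 1 :=
    S8.top_eq
  have htopm0 : S8.topm n q ≠ (0 : Fin n →₀ ℕ) := by
    intro h
    have h2 : S8.topm n q ⟨0, hn⟩ = 0 := by rw [h]; rfl
    rw [S8.topm_apply] at h2
    omega
  rw [htop, ← Ideal.Quotient.mkₐ_eq_mk (R₁ := F)]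
  constructor
  · ext y
    simp only [Set.mem_setOf_eq, SetLike.mem_coe]
    constructor
    · -- invariant → in span
      intro hy
      obtain ⟨f₀, hf₀⟩ := Ideal.Quotient.mk_surjective (I := frobIdeal F n q) y
      set f := S8.red q f₀ with hfdef
      have hmk : Ideal.Quotient.mk (frobIdeal F n q) f = y := by
        rw [hfdef, S8.mk_red, hf₀]
      have hred : S8.IsRed q f := S8.isRed_red f₀
      have hstep : ∀ g : GL (Fin n) F,
          S8.substM (g : Matrix (Fin n) (Fin n) F) f - f ∈ frobIdeal F n q := by
        intro g
        rw [← Ideal.Quotient.mk_eq_mk_iff_sub_mem]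
        exact (hy g f hmk).trans hmk.symm
      have hsupp := S8.support_subset_main hq hred hstep
      have hf2 : f = C (coeff 0 f) + monomial (S8.topm n q) (coeff (S8.topm n q) f) := by
        have h1 : f = ∑ m ∈ ({0, S8.topm n q} : Finset (Fin n →₀ ℕ)), monomial m (coeff m f) := by
          conv_lhs => rw [f.as_sum]
          exact Finset.sum_subset hsupp fun x _ hx => by
            rw [MvPolynomial.notMem_support_iff.1 hx, map_zero]
        rw [Finset.sum_pair (Ne.symm htopm0), monomial_zero'] at h1
        exact h1
      rw [Submodule.mem_span_pair]
      refine ⟨coeff 0 f, coeff (S8.topm n q) f, ?_⟩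
      rw [S8.mkQ_span, Ideal.Quotient.mkₐ_eq_mk, ← hf2, hmk]
    · -- in span → invariant
      intro hy g f hfy
      obtain ⟨a, b, hab⟩ := Submodule.mem_span_pair.1 hy
      rw [S8.mkQ_span] at hab
      have hsub : f - (C a + monomial (S8.topm n q) b) ∈ frobIdeal F n q := by
        rw [← Ideal.Quotient.mk_eq_mk_iff_sub_mem]
        exact (show Ideal.Quotient.mk (frobIdeal F n q) f = y from hfy).trans
          ((show Ideal.Quotient.mk (frobIdeal F n q) (C a + monomial (S8.topm n q) b) = y
            from hab).symm)
      have h3 : Ideal.Quotient.mk (frobIdeal F n q) (glAct F n g f)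
          = Ideal.Quotient.mk (frobIdeal F n q)
              (S8.substM (g : Matrix (Fin n) (Fin n) F) (C a + monomial (S8.topm n q) b)) := by
        rw [glAct_eq_substM, Ideal.Quotient.mk_eq_mk_iff_sub_mem, ← map_sub]
        exact S8.substM_mem_frobIdeal hq _ hsub
      show Ideal.Quotient.mk (frobIdeal F n q) (glAct F n g f) = y
      rw [h3]
      have h4 : S8.substM (g : Matrix (Fin n) (Fin n) F) (C a + monomial (S8.topm n q) b)
          = C a + b • S8.substM (g : Matrix (Fin n) (Fin n) F) (monomial (S8.topm n q) 1) := by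
        rw [map_add]
        congr 1
        · rw [← MvPolynomial.algebraMap_eq]
          exact (S8.substM (g : Matrix (Fin n) (Fin n) F)).commutes a
        · rw [show (monomial (S8.topm n q) b : MvPolynomial (Fin n) F)
              = b • monomial (S8.topm n q) 1 by rw [smul_monomial, smul_eq_mul, mul_one], map_smul]
      rw [h4, ← Ideal.Quotient.mkₐ_eq_mk (R₁ := F), map_add, map_smul]
      have h5 := S8.topInv_GL hq g
      unfold S8.TopInv at h5
      rw [← Ideal.Quotient.mkₐ_eq_mk (R₁ := F)] at h5
      rw [h5, ← hab, ← S8.mkQ_span]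
      congr 1
      rw [show (C a : MvPolynomial (Fin n) F) = a • 1 by
        rw [Algebra.smul_def, MvPolynomial.algebraMap_eq, mul_one], map_smul, map_one]
  · -- linear independence
    rw [linearIndependent_fin2]
    constructor
    · simp only [Matrix.cons_val_one, Matrix.head_cons, Matrix.cons_val_zero]
      rw [Ideal.Quotient.mkₐ_eq_mk, Ne, Ideal.Quotient.eq_zero_iff_mem]
      intro hmem
      have := S8.eq_zero_of_isRed_mem (q := q) ?_ hmem
      · have hco := congrArg (coeff (S8.topm n q)) this
        rw [coeff_monomial, if_pos rfl, coeff_zero] at hco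
        exact one_ne_zero hco
      · intro m hm k
        rw [support_monomial, if_neg (one_ne_zero (α := F))] at hm
        rw [Finset.mem_singleton] at hm
        rw [hm, S8.topm_apply]
        omega
    · intro a
      simp only [Matrix.cons_val_one, Matrix.head_cons, Matrix.cons_val_zero]
      rw [Ideal.Quotient.mkₐ_eq_mk]
      intro h
      have h1 : Ideal.Quotient.mk (frobIdeal F n q) (monomial (S8.topm n q) a)
          = Ideal.Quotient.mk (frobIdeal F n q) 1 := by
        have e1 : (monomial (S8.topm n q) a : MvPolynomial (Fin n) F)
            = a • monomial (S8.topm n q) 1 := by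
          rw [smul_monomial, smul_eq_mul, mul_one]
        rw [e1]
        calc Ideal.Quotient.mk (frobIdeal F n q) (a • monomial (S8.topm n q) 1)
            = a • Ideal.Quotient.mk (frobIdeal F n q) (monomial (S8.topm n q) 1) :=
              map_smul (Ideal.Quotient.mkₐ F (frobIdeal F n q)) a _
          _ = 1 := h
          _ = Ideal.Quotient.mk (frobIdeal F n q) 1 := (map_one
              (Ideal.Quotient.mk (frobIdeal F n q))).symm
      rw [Ideal.Quotient.mk_eq_mk_iff_sub_mem] at h1
      have h2 := S8.eq_zero_of_isRed_mem (q := q) ?_ h1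
      · have h3 := congrArg (coeff 0) h2
        rw [coeff_sub, coeff_monomial, if_neg htopm0] at h3
        simp at h3
      · intro m hm k
        rcases Finset.mem_union.1 (MvPolynomial.support_sub _ _ _ hm) with h' | h'
        · rw [support_monomial] at h'
          by_cases ha : a = 0
          · rw [if_pos ha] at h'; exact absurd h' (Finset.notMem_empty m)
          · rw [if_neg ha, Finset.mem_singleton] at h'
            rw [h', S8.topm_apply]; omega
        · have hm1 := MvPolynomial.mem_support_iff.1 h'
          rw [MvPolynomial.coeff_one] at hm1
          have hm0 : m = 0 := by
            by_contra hne
            rw [if_neg (fun hh => hne hh.symm)] at hm1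
            exact hm1 rfl
          rw [hm0]
          simp only [Finsupp.coe_zero, Pi.zero_apply]
          omega
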